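/- Powers of monomial ideals in monoid algebras: Let P be a commutative monoid (written additively) and I ⊆ P an ideal of P (a subset with I + P ⊆ I). Let J be the ideal of ℤ[P] = AddMonoidAlgebra ℤ P generated by the basis elements [i] = single i 1 for i ∈ I. Then for every integer n ≥ 1, the n-th power Jⁿ equals the set of elements of ℤ[P] whose support is contained in Iⁿ := {i₁ + ⋯ + iₙ : i₁, …, iₙ ∈ I}; equivalently, Jⁿ is the ℤ-span of the basis elements [p] for p ∈ Iⁿ. -/

import Mathlib

open AddMonoidAlgebra Pointwise

/-- Membership in the span of monomials over an absorbing set `s` is exactly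
support containment in `s`. -/
lemma mem_span_single_iff
    (P : Type*) [AddCommMonoid P] (s : Set P)
    (hs : ∀ a ∈ s, ∀ p : P, a + p ∈ s) (f : AddMonoidAlgebra ℤ P) :
    f ∈ Ideal.span {f : AddMonoidAlgebra ℤ P | ∃ i ∈ s, f = AddMonoidAlgebra.single i 1} ↔
      ↑f.coeff.support ⊆ s := by
  classical
  constructor
  · intro hf
    let K : Ideal (AddMonoidAlgebra ℤ P) :=
      { carrier := {f : AddMonoidAlgebra ℤ P | ↑f.coeff.support ⊆ s}
        zero_mem' := by simp
        add_mem' := by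
          intro a b ha hb
          refine (Finset.coe_subset.mpr (Finsupp.support_add)).trans ?_
          push_cast
          exact Set.union_subset ha hb
        smul_mem' := by
          intro c f hf
          simp only [smul_eq_mul, Set.mem_setOf_eq]
          refine (Finset.coe_subset.mpr (AddMonoidAlgebra.support_coeff_mul_subset c f)).trans ?_
          intro x hx
          rw [Finset.coe_add] at hx
          obtain ⟨a, ha, b, hb, rfl⟩ := hx
          show a + b ∈ s
          rw [add_comm]
          exact hs b (hf hb) a }
    have : Ideal.span {f : AddMonoidAlgebra ℤ P | ∃ i ∈ s, f = AddMonoidAlgebra.single i 1} ≤ K := by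
      rw [Ideal.span_le]
      rintro _ ⟨i, hi, rfl⟩
      intro x hx
      change x ∈ (Finsupp.single i (1 : ℤ)).support at hx
      have := Finsupp.support_single_subset (a := i) (b := (1 : ℤ)) hx
      simp only [Finset.mem_singleton] at this
      subst this
      exact hi
    exact this hf
  · intro hf
    have hrep : f = ∑ p ∈ f.coeff.support, AddMonoidAlgebra.single p (f.coeff p) :=
      (AddMonoidAlgebra.sum_coeff_single f).symm
    rw [hrep]
    refine Ideal.sum_mem _ fun p hp => ?_
    have : AddMonoidAlgebra.single p (f.coeff p) =
        AddMonoidAlgebra.single (0 : P) (f.coeff p) * AddMonoidAlgebra.single p 1 := by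
      rw [AddMonoidAlgebra.single_mul_single]
      simp
    rw [this]
    exact Ideal.mul_mem_left _ _ (Ideal.subset_span ⟨p, hf hp, rfl⟩)

/-- **Powers of monomial ideals in monoid algebras.** Let `P` be a commutative monoid and
`I ⊆ P` a monoid ideal (`I + P ⊆ I`).  Let `J` be the ideal of `ℤ[P]` generated by the
basis elements `[i]` for `i ∈ I`.  Then for every `n ≥ 1`, the power `Jⁿ` consists
exactly of the elements of `ℤ[P]` whose support is contained in
`Iⁿ = {i₁ + ⋯ + iₙ : i₁, …, iₙ ∈ I}`. -/
theorem monomial_ideal_powers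
    (P : Type*) [AddCommMonoid P] (I : Set P)
    (hI : ∀ i ∈ I, ∀ p : P, i + p ∈ I)
    (J : Ideal (AddMonoidAlgebra ℤ P))
    (hJ : J = Ideal.span {f : AddMonoidAlgebra ℤ P | ∃ i ∈ I, f = AddMonoidAlgebra.single i 1}) :
    ∀ n : ℕ, 1 ≤ n → ∀ f : AddMonoidAlgebra ℤ P,
      f ∈ J ^ n ↔
        ↑f.coeff.support ⊆ {p : P | ∃ g : Fin n → P, (∀ j, g j ∈ I) ∧ p = ∑ j, g j} := by
  -- the sets Iⁿ
  set S : ℕ → Set P := fun n => {p : P | ∃ g : Fin n → P, (∀ j, g j ∈ I) ∧ p = ∑ j, g j} with hS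
  -- each Iⁿ (n ≥ 1) is absorbing
  have habs : ∀ n : ℕ, ∀ a ∈ S (n + 1), ∀ p : P, a + p ∈ S (n + 1) := by
    intro n a ha p
    obtain ⟨g, hg, rfl⟩ := ha
    refine ⟨Fin.cons (g 0 + p) (fun j => g j.succ), ?_, ?_⟩
    · intro j
      refine Fin.cases ?_ ?_ j
      · simpa using hI (g 0) (hg 0) p
      · intro i; simpa using hg i.succ
    · rw [Fin.sum_cons, Fin.sum_univ_succ]
      abel
  intro n hn
  induction n, hn using Nat.le_induction with
  | base =>
    intro f
    have hS1 : S 1 = I := by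
      ext p
      constructor
      · rintro ⟨g, hg, rfl⟩
        simpa [Fin.sum_univ_one] using hg 0
      · intro hp
        exact ⟨fun _ => p, fun _ => hp, by simp [Fin.sum_univ_one]⟩
    rw [pow_one, hJ, mem_span_single_iff P I hI f]
    show _ ↔ ↑f.coeff.support ⊆ S 1
    rw [hS1]
  | succ n hn IH =>
    intro f
    -- J ^ n = span of monomials over S n
    have hSn_abs : ∀ a ∈ S n, ∀ p : P, a + p ∈ S n := by
      obtain ⟨m, rfl⟩ := Nat.exists_eq_add_of_le hn
      simpa [add_comm] using habs m
    have hJn : J ^ n = Ideal.span {f : AddMonoidAlgebra ℤ P | ∃ q ∈ S n, f = AddMonoidAlgebra.single q 1} := by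
      ext g
      rw [IH g, mem_span_single_iff P (S n) hSn_abs g]
    have hprod : ({f : AddMonoidAlgebra ℤ P | ∃ q ∈ S n, f = AddMonoidAlgebra.single q 1} *
        {f : AddMonoidAlgebra ℤ P | ∃ i ∈ I, f = AddMonoidAlgebra.single i 1}) =
        {f : AddMonoidAlgebra ℤ P | ∃ q ∈ S (n + 1), f = AddMonoidAlgebra.single q 1} := by
      ext x
      constructor
      · rintro ⟨-, ⟨q, hq, rfl⟩, -, ⟨i, hi, rfl⟩, rfl⟩
        obtain ⟨g, hg, rfl⟩ := hq
        refine ⟨∑ j, g j + i, ⟨Fin.snoc g i, ?_, ?_⟩, ?_⟩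
        · intro j
          refine Fin.lastCases ?_ ?_ j
          · simpa using hi
          · intro k; simpa using hg k
        · rw [Fin.sum_univ_castSucc]
          simp
        · show AddMonoidAlgebra.single _ 1 * AddMonoidAlgebra.single _ 1 = _
          rw [AddMonoidAlgebra.single_mul_single]; simp
      · rintro ⟨q, ⟨g, hg, rfl⟩, rfl⟩
        refine ⟨AddMonoidAlgebra.single (∑ j : Fin n, g j.castSucc) 1,
          ⟨∑ j : Fin n, g j.castSucc, ⟨fun j => g j.castSucc, fun j => hg _, rfl⟩, rfl⟩,
          AddMonoidAlgebra.single (g (Fin.last n)) 1, ⟨g (Fin.last n), hg _, rfl⟩, ?_⟩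
        show AddMonoidAlgebra.single _ 1 * AddMonoidAlgebra.single _ 1 = _
        rw [AddMonoidAlgebra.single_mul_single, one_mul, ← Fin.sum_univ_castSucc]
    rw [pow_succ, hJn, hJ, Ideal.span_mul_span', hprod,
      mem_span_single_iff P (S (n + 1)) (habs n) f]
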